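/- Let X be a hermetic metric space and A ⊆ X. Then the following are equivalent: (i) A is a closed set containing no isolated points of X; (ii) there exists a continuous function f : X → ℝ such that ℓ^∞(f) = L^∞(f) = 𝕃^∞(f) = A. -/

import Mathlib

open Metric Set Topology Filter

/-- `Lip^r f(x) = (1/r) · sup_{u ∈ B(x,r)} |f(x) − f(u)|`, with the convention
`sup ∅ = 0`, computed in `[0,∞]`. -/
noncomputable def lipR {X : Type*} [MetricSpace X] (f : X → ℝ) (x : X) (r : ℝ) : ENNReal :=
  (⨆ u ∈ Metric.ball x r, ENNReal.ofReal |f x - f u|) / ENNReal.ofReal r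

/-- The big Lipschitz derivative `Lip f(x) = limsup_{r→0⁺} Lip^r f(x)`. -/
noncomputable def bigLip {X : Type*} [MetricSpace X] (f : X → ℝ) (x : X) : ENNReal :=
  Filter.limsup (lipR f x) (𝓝[>] (0 : ℝ))

/-- The little Lipschitz derivative `lip f(x) = liminf_{r→0⁺} Lip^r f(x)`. -/
noncomputable def litLip {X : Type*} [MetricSpace X] (f : X → ℝ) (x : X) : ENNReal :=
  Filter.liminf (lipR f x) (𝓝[>] (0 : ℝ))

/-- The local Lipschitz derivative
`𝕃ip f(x) = limsup_{(u,v)→(x,x), u≠v} |f(u) − f(v)| / d(u,v)`. -/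
noncomputable def locLip {X : Type*} [MetricSpace X] (f : X → ℝ) (x : X) : ENNReal :=
  Filter.limsup (fun p : X × X => ENNReal.ofReal (|f p.1 - f p.2| / dist p.1 p.2))
    (𝓝[{p : X × X | p.1 ≠ p.2}] (x, x))

/-- The hermeticity of a metric space at a point:
`H(X,x) = liminf_{r→0⁺} (1/r)·sup_{u ∈ B(x,r)} d(u,x)`, in `[0,∞]`. -/
noncomputable def herm {X : Type*} [MetricSpace X] (x : X) : ENNReal :=
  Filter.liminf (fun r : ℝ =>
    (⨆ u ∈ Metric.ball x r, ENNReal.ofReal (dist u x)) / ENNReal.ofReal r) (𝓝[>] (0 : ℝ))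

/-- The hermeticity of a metric space: `H(X) = inf_{x ∈ X^d} H(X,x)`, the
infimum being taken over all non-isolated points of `X`. `X` is hermetic if
`H(X) > 0`. -/
noncomputable def hermSpace (X : Type*) [MetricSpace X] : ENNReal :=
  ⨅ x : {x : X // ¬ IsOpen ({x} : Set X)}, herm x.1


section general
variable {X : Type*} [MetricSpace X] (f : X → ℝ) (x : X)

lemma litLip_ne_top_of_isolated (h : IsOpen ({x} : Set X)) : litLip f x ≠ ⊤ := by
  obtain ⟨r₀, hr₀, hball⟩ := Metric.isOpen_iff.1 h x rfl
  have hev : ∀ᶠ r in 𝓝[>] (0:ℝ), lipR f x r = 0 := by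
    filter_upwards [Ioo_mem_nhdsGT_of_mem (by exact ⟨le_refl 0, hr₀⟩ : (0:ℝ) ∈ Ico 0 r₀)]
      with r hr
    have hsup : (⨆ u ∈ ball x r, ENNReal.ofReal |f x - f u|) = 0 := by
      refine le_antisymm (iSup₂_le fun u hu => ?_) (zero_le)
      have hux : u = x := hball (ball_subset_ball hr.2.le hu)
      simp [hux]
    rw [lipR, hsup, ENNReal.zero_div]
  rw [litLip, liminf_congr hev, liminf_const]
  exact ENNReal.zero_ne_top

lemma lip_ne_top_of_locally_lipschitz {ρ L : ℝ} (hρ : 0 < ρ) (hL : 0 ≤ L)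
    (hf : ∀ u ∈ ball x ρ, ∀ v ∈ ball x ρ, |f u - f v| ≤ L * dist u v) :
    litLip f x ≠ ⊤ ∧ bigLip f x ≠ ⊤ ∧ locLip f x ≠ ⊤ := by
  have hbig : bigLip f x ≤ ENNReal.ofReal L := by
    refine limsup_le_of_le (by isBoundedDefault) ?_
    filter_upwards [Ioo_mem_nhdsGT_of_mem (by exact ⟨le_refl 0, hρ⟩ : (0:ℝ) ∈ Ico 0 ρ)]
      with r hr
    have hsup : (⨆ u ∈ ball x r, ENNReal.ofReal |f x - f u|)
        ≤ ENNReal.ofReal L * ENNReal.ofReal r := by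
      refine iSup₂_le fun u hu => ?_
      have hu' : u ∈ ball x ρ := ball_subset_ball hr.2.le hu
      have h1 : |f x - f u| ≤ L * dist x u :=
        hf x (mem_ball_self (hr.1.trans hr.2)) u hu'
      have h2 : L * dist x u ≤ L * r := by
        have := (mem_ball'.1 hu).le
        nlinarith [dist_nonneg (x := x) (y := u)]
      calc ENNReal.ofReal |f x - f u| ≤ ENNReal.ofReal (L * r) :=
            ENNReal.ofReal_le_ofReal (h1.trans h2)
        _ = ENNReal.ofReal L * ENNReal.ofReal r := ENNReal.ofReal_mul hL
    rw [lipR]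
    exact ENNReal.div_le_of_le_mul hsup
  have hlit : litLip f x ≤ ENNReal.ofReal L :=
    le_trans (liminf_le_limsup) hbig
  have hloc : locLip f x ≤ ENNReal.ofReal L := by
    refine limsup_le_of_le (by isBoundedDefault) ?_
    have hU : (ball x ρ ×ˢ ball x ρ) ∈ 𝓝 ((x, x) : X × X) :=
      (isOpen_ball.prod isOpen_ball).mem_nhds ⟨mem_ball_self hρ, mem_ball_self hρ⟩
    filter_upwards [eventually_nhdsWithin_of_eventually_nhds
      (eventually_of_mem hU fun p hp => hp), eventually_mem_nhdsWithin] with p hp hps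
    have hdpos : 0 < dist p.1 p.2 := dist_pos.2 hps
    have : |f p.1 - f p.2| / dist p.1 p.2 ≤ L := by
      rw [div_le_iff₀ hdpos]
      exact hf p.1 hp.1 p.2 hp.2
    exact ENNReal.ofReal_le_ofReal (this.trans (by simp))
  exact ⟨ne_top_of_le_ne_top ENNReal.ofReal_ne_top hlit,
    ne_top_of_le_ne_top ENNReal.ofReal_ne_top hbig,
    ne_top_of_le_ne_top ENNReal.ofReal_ne_top hloc⟩

end general


section general
variable {X : Type*} [MetricSpace X] (f : X → ℝ) (x : X)

lemma isClosed_locLip_top : IsClosed {x : X | locLip f x = ⊤} := by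
  rw [← isOpen_compl_iff]
  rw [Metric.isOpen_iff]
  intro x hx
  have hne : locLip f x ≠ ⊤ := hx
  set b := locLip f x + 1 with hb
  have hblt : locLip f x < b := ENNReal.lt_add_right hne one_ne_zero
  have hbne : b ≠ ⊤ := by
    rw [hb]
    exact ENNReal.add_ne_top.2 ⟨hne, ENNReal.one_ne_top⟩
  have hev := eventually_lt_of_limsup_lt hblt (by isBoundedDefault)
  rw [eventually_nhdsWithin_iff] at hev
  rw [Filter.eventually_iff_exists_mem] at hev
  obtain ⟨V, hV, hVP⟩ := hev
  rw [mem_nhds_prod_iff] at hV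
  obtain ⟨U1, hU1, U2, hU2, hU⟩ := hV
  obtain ⟨ε1, hε1, hballs1⟩ := Metric.mem_nhds_iff.1 hU1
  obtain ⟨ε2, hε2, hballs2⟩ := Metric.mem_nhds_iff.1 hU2
  set ε := min ε1 ε2
  refine ⟨ε / 2, by positivity, fun y hy => ?_⟩
  have hloc : locLip f y ≤ b := by
    refine limsup_le_of_le (by isBoundedDefault) ?_
    have hU' : (ball x ε ×ˢ ball x ε) ∈ 𝓝 ((y, y) : X × X) := by
      refine (isOpen_ball.prod isOpen_ball).mem_nhds ⟨?_, ?_⟩ <;>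
        · simp only [mem_ball] at hy ⊢
          have : (0:ℝ) < ε := lt_min hε1 hε2
          linarith [hy]
    filter_upwards [eventually_nhdsWithin_of_eventually_nhds
      (eventually_of_mem hU' fun p hp => hp), eventually_mem_nhdsWithin] with p hp hps
    have hpV : p ∈ V := hU ⟨hballs1 (ball_subset_ball (min_le_left _ _) hp.1),
      hballs2 (ball_subset_ball (min_le_right _ _) hp.2)⟩
    exact (hVP p hpV hps).le
  exact fun h => hbne (top_le_iff.1 (h ▸ hloc))

lemma litLip_eq_top_of (h : ∀ M : ℝ, 0 < M → ∀ᶠ r in 𝓝[>] (0:ℝ),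
    ∃ u, dist u x < r ∧ M * r ≤ |f x - f u|) : litLip f x = ⊤ := by
  by_contra hne
  set M := (litLip f x).toReal + 1 with hM
  have hMpos : 0 < M := by positivity
  have h2 : ENNReal.ofReal M ≤ litLip f x := by
    refine le_liminf_of_le (by isBoundedDefault) ?_
    filter_upwards [h M hMpos, self_mem_nhdsWithin] with r hr hrpos
    obtain ⟨u, hu1, hu2⟩ := hr
    have hrpos' : (0:ℝ) < r := hrpos
    have hsup : ENNReal.ofReal M * ENNReal.ofReal r
        ≤ ⨆ u ∈ ball x r, ENNReal.ofReal |f x - f u| := by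
      calc ENNReal.ofReal M * ENNReal.ofReal r = ENNReal.ofReal (M * r) :=
            (ENNReal.ofReal_mul hMpos.le).symm
        _ ≤ ENNReal.ofReal |f x - f u| := ENNReal.ofReal_le_ofReal hu2
        _ ≤ ⨆ u ∈ ball x r, ENNReal.ofReal |f x - f u| :=
            le_biSup (fun v => ENNReal.ofReal |f x - f v|) (mem_ball.2 hu1)
    rw [lipR]
    rw [ENNReal.le_div_iff_mul_le (Or.inl (by simp [hrpos'])) (Or.inl ENNReal.ofReal_ne_top)]
    exact hsup
  have h3 : litLip f x < ENNReal.ofReal M := by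
    rw [ENNReal.lt_ofReal_iff_toReal_lt hne]
    simp [hM]
  exact absurd (h2.trans_lt h3) (lt_irrefl _)

lemma locLip_eq_top_of (h : ∀ M : ℝ, 0 < M → ∀ ε : ℝ, 0 < ε →
    ∃ u, dist u x < ε ∧ u ≠ x ∧ M * dist u x ≤ |f x - f u|) : locLip f x = ⊤ := by
  by_contra hne
  set M := (locLip f x).toReal + 1 with hM
  have hMpos : 0 < M := by positivity
  have h2 : ENNReal.ofReal M ≤ locLip f x := by
    refine le_limsup_of_frequently_le ?_ (by isBoundedDefault)
    rw [Filter.frequently_iff]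
    intro U hU
    rw [mem_nhdsWithin] at hU
    obtain ⟨V, hVopen, hVmem, hVU⟩ := hU
    obtain ⟨ε, hε, hball⟩ := Metric.isOpen_iff.1 hVopen _ hVmem
    obtain ⟨u, hu1, hu2, hu3⟩ := h M hMpos ε hε
    have hdpos : 0 < dist u x := dist_pos.2 hu2
    refine ⟨((x, u) : X × X), hVU ⟨hball ?_, ?_⟩, ?_⟩
    · rw [mem_ball, Prod.dist_eq]
      simp only [dist_self]
      simp [hu1, hε]
    · exact fun hxy => hu2 (by simpa using hxy.symm)
    · apply ENNReal.ofReal_le_ofReal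
      rw [le_div_iff₀ (by rwa [dist_comm])]
      rw [dist_comm]
      exact hu3
  have h3 : locLip f x < ENNReal.ofReal M := by
    rw [ENNReal.lt_ofReal_iff_toReal_lt hne]
    simp [hM]
  exact absurd (h2.trans_lt h3) (lt_irrefl _)

end general


section tent
variable {X : Type*} [MetricSpace X] (N : Set X) (s w : ℝ)

noncomputable def tent (u : X) : ℝ := s * min (Metric.infDist u N) w

lemma tent_def (u : X) : tent N s w u = s * min (Metric.infDist u N) w := rfl

lemma tent_nonneg (hs : 0 ≤ s) (hw : 0 ≤ w) (u : X) : 0 ≤ tent N s w u :=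
  mul_nonneg hs (le_min Metric.infDist_nonneg hw)

lemma tent_le (hs : 0 ≤ s) (u : X) : tent N s w u ≤ s * w :=
  mul_le_mul_of_nonneg_left (min_le_right _ _) hs

lemma tent_abs_sub (hs : 0 ≤ s) (u v : X) :
    |tent N s w u - tent N s w v| ≤ s * dist u v := by
  have h1 : |Metric.infDist u N - Metric.infDist v N| ≤ dist u v := by
    rw [abs_sub_le_iff]
    constructor
    · linarith [Metric.infDist_le_infDist_add_dist (x := u) (y := v) (s := N), dist_comm u v]
    · linarith [Metric.infDist_le_infDist_add_dist (x := v) (y := u) (s := N), dist_comm u v]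
  have h2 : |min (Metric.infDist u N) w - min (Metric.infDist v N) w| ≤ dist u v := by
    refine le_trans (abs_min_sub_min_le_max _ _ _ _) ?_
    simpa using h1
  calc |tent N s w u - tent N s w v| = s * |min (Metric.infDist u N) w - min (Metric.infDist v N) w| := by
        rw [tent, tent, ← mul_sub, abs_mul, abs_of_nonneg hs]
    _ ≤ s * dist u v := mul_le_mul_of_nonneg_left h2 hs

lemma tent_zero_of_mem {p : X} (hp : p ∈ N) (hw : 0 ≤ w) : tent N s w p = 0 := by
  rw [tent, Metric.infDist_zero_of_mem hp, min_eq_left hw, mul_zero]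

lemma tent_plateau {u : X} (h : w ≤ Metric.infDist u N) : tent N s w u = s * w := by
  rw [tent, min_eq_right h]

lemma tent_continuous : Continuous (tent N s w) :=
  continuous_const.mul ((Metric.continuous_infDist_pt N).min continuous_const)

end tent

section net
variable {X : Type*} [MetricSpace X]

lemma exists_net (A : Set X) (hAne : A.Nonempty) {R : ℝ} (hR : 0 < R) :
    ∃ N : Set X, N ⊆ A ∧ N.Nonempty ∧
      (∀ p ∈ N, ∀ q ∈ N, p ≠ q → R ≤ dist p q) ∧ (∀ a ∈ A, ∃ p ∈ N, dist a p < R) := by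
  obtain ⟨a₀, ha₀⟩ := hAne
  set S : Set (Set X) := {s | s ⊆ A ∧ ∀ p ∈ s, ∀ q ∈ s, p ≠ q → R ≤ dist p q} with hS
  have h0 : ({a₀} : Set X) ∈ S := ⟨by simpa using ha₀, by simp⟩
  have hchain : ∀ c ⊆ S, IsChain (· ⊆ ·) c → c.Nonempty → ∃ ub ∈ S, ∀ s ∈ c, s ⊆ ub := by
    intro c hc hchain hcne
    refine ⟨⋃₀ c, ⟨?_, ?_⟩, fun s hs => subset_sUnion_of_mem hs⟩
    · exact sUnion_subset fun s hs => (hc hs).1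
    · rintro p ⟨s1, hs1, hp⟩ q ⟨s2, hs2, hq⟩ hpq
      rcases hchain.total hs1 hs2 with hsub | hsub
      · exact (hc hs2).2 p (hsub hp) q hq hpq
      · exact (hc hs1).2 p hp q (hsub hq) hpq
  obtain ⟨m, hsub, hm⟩ := zorn_subset_nonempty S hchain {a₀} h0
  refine ⟨m, hm.1.1, ⟨a₀, hsub rfl⟩, hm.1.2, ?_⟩
  intro a ha
  by_contra hcon
  push_neg at hcon
  have ham : a ∉ m := by
    intro h
    have := hcon a h
    simp only [dist_self] at this
    linarith
  have hins : insert a m ∈ S := by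
    constructor
    · exact insert_subset ha hm.1.1
    · intro p hp q hq hpq
      rcases hp with rfl | hp
      · rcases hq with rfl | hq
        · exact absurd rfl hpq
        · exact hcon q hq
      · rcases hq with rfl | hq
        · rw [dist_comm]; exact hcon p hp
        · exact hm.1.2 p hp q hq hpq
  exact ham (hm.2 hins (subset_insert a m) (mem_insert a m))

end net

section geom

lemma geom_sum_bound {b : ℝ} (hb0 : 0 < b) (hb : b ≤ 1/2) (j : ℕ) :
    ∑ i ∈ Finset.range j, (1/b)^i ≤ 2 * b * (1/b)^j := by
  induction j with
  | zero => simp; positivity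
  | succ j ih =>
    rw [Finset.sum_range_succ]
    have hp : (0:ℝ) < (1/b)^j := by positivity
    have : (1/b)^(j+1) = (1/b)^j * (1/b) := pow_succ _ _
    rw [this]
    have hbne : b ≠ 0 := hb0.ne'
    have : 2 * b * ((1/b)^j * (1/b)) = 2 * (1/b)^j := by field_simp
    rw [this]
    nlinarith

lemma geom_tail_bound {b : ℝ} (hb0 : 0 < b) (hb : b ≤ 1/2) (k : ℕ) :
    ∑' i : ℕ, b^(i+k) ≤ 2 * b^k := by
  have hsum : ∑' i : ℕ, b^(i+k) = (1-b)⁻¹ * b^k := by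
    have : ∀ i : ℕ, b^(i+k) = b^i * b^k := fun i => pow_add b i k
    rw [tsum_congr this, tsum_mul_right, tsum_geometric_of_lt_one hb0.le (by linarith)]
  rw [hsum]
  have h2 : (1-b)⁻¹ ≤ 2 := by
    rw [inv_le_comm₀ (by linarith) (by norm_num)]
    linarith
  have : (0:ℝ) ≤ b^k := by positivity
  nlinarith

end geom


set_option maxHeartbeats 2000000 in
lemma exists_good_function {X : Type*} [MetricSpace X] (A : Set X) (hA : IsClosed A)
    (hAne : A.Nonempty) {c : ℝ} (hc0 : 0 < c) (hc1 : c ≤ 1/2)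
    (hherm : ∀ x ∈ A, ∀ᶠ r in 𝓝[>] (0:ℝ), ∃ w, dist w x < r ∧ c * r ≤ dist w x) :
    ∃ f : X → ℝ, Continuous f ∧
      (∀ x ∈ A, litLip f x = ⊤ ∧ locLip f x = ⊤) ∧
      (∀ x ∉ A, litLip f x ≠ ⊤ ∧ bigLip f x ≠ ⊤ ∧ locLip f x ≠ ⊤) := by
  have hδ0 : (0:ℝ) < c/100 := by positivity
  set δ : ℝ := c/100 with hδdef
  have hb0 : (0:ℝ) < δ/32 := by positivity
  set b : ℝ := δ/32 with hbdef
  have hδsmall : δ ≤ 1/200 := by rw [hδdef]; linarith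
  have hbsmall : b ≤ 1/6400 := by rw [hbdef]; linarith
  have hbhalf : b ≤ 1/2 := by linarith
  have hb1 : b < 1 := by linarith
  have hcδ : c = 100*δ := by rw [hδdef]; ring
  have hδb : δ = 32*b := by rw [hbdef]; ring
  have hbne : b ≠ 0 := hb0.ne'
  have hδne : δ ≠ 0 := hδ0.ne'
  have hRpos : ∀ j : ℕ, (0:ℝ) < b^(2*j) := fun j => by positivity
  have hhj : ∀ j : ℕ, (0:ℝ) < b^j := fun j => by positivity
  choose N hNA hNne hNsep hNcov using fun j : ℕ => exists_net A hAne (hRpos j)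
  set F : ℕ → X → ℝ := fun j => tent (N j) ((1/δ)*(1/b)^j) (δ * b^(2*j)) with hFdef
  have hslope0 : ∀ j:ℕ, (0:ℝ) ≤ (1/δ)*(1/b)^j := fun j => by positivity
  have hw0 : ∀ j:ℕ, (0:ℝ) ≤ δ * b^(2*j) := fun j => (mul_pos hδ0 (hRpos j)).le
  have hsw : ∀ j:ℕ, ((1/δ)*(1/b)^j) * (δ * b^(2*j)) = b^j := by
    intro j
    rw [one_div, one_div, inv_pow, two_mul, pow_add]
    field_simp
  have hF0 : ∀ (j:ℕ) u, 0 ≤ F j u := fun j u => tent_nonneg _ _ _ (hslope0 j) (hw0 j) u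
  have hFle : ∀ (j:ℕ) u, F j u ≤ b^j := fun j u => (tent_le _ _ _ (hslope0 j) u).trans_eq (hsw j)
  have hFlip : ∀ (j:ℕ) u v, |F j u - F j v| ≤ (1/δ)*(1/b)^j * dist u v :=
    fun j u v => tent_abs_sub _ _ _ (hslope0 j) u v
  have hgeomsummable : Summable (fun j : ℕ => b^j) :=
    summable_geometric_of_lt_one hb0.le hb1
  have hFsummable : ∀ u, Summable (fun j => F j u) := fun u =>
    Summable.of_nonneg_of_le (fun j => hF0 j u) (fun j => hFle j u) hgeomsummable
  set f : X → ℝ := fun u => ∑' j, F j u with hfdef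
  have hfcont : Continuous f := by
    refine continuous_tsum (fun j => tent_continuous _ _ _) hgeomsummable (fun j u => ?_)
    rw [Real.norm_eq_abs, abs_of_nonneg (hF0 j u)]
    exact hFle j u
  -- tail summability
  have htailsummable : ∀ (u : X) (k : ℕ), Summable (fun i => F (i+k) u) := fun u k =>
    (hFsummable u).comp_injective (add_left_injective k)
  have hgeomtailsummable : ∀ k : ℕ, Summable (fun i : ℕ => b^(i+k)) := fun k =>
    hgeomsummable.comp_injective (add_left_injective k)
  -- tail bounds
  have htail : ∀ (k : ℕ) (u : X), 0 ≤ (∑' i, F (i+k) u) ∧ (∑' i, F (i+k) u) ≤ 2*b^k := by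
    intro k u
    constructor
    · exact tsum_nonneg (fun i => hF0 _ u)
    · refine le_trans (Summable.tsum_le_tsum (fun i => hFle _ u) (htailsummable u k)
        (hgeomtailsummable k)) (geom_tail_bound hb0 hbhalf k)
  -- key estimate
  have key : ∀ (j:ℕ) (u v : X), dist u v ≤ b^(2*j) →
      |(f u - f v) - (F j u - F j v)| ≤ b^j/8 := by
    intro j u v hduv
    have hsplit : ∀ w, f w = (∑ i ∈ Finset.range j, F i w) + F j w + ∑' i, F (i+(j+1)) w := by
      intro w
      have h1 := Summable.sum_add_tsum_nat_add (f := fun i => F i w) (j+1) (hFsummable w)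
      rw [Finset.sum_range_succ] at h1
      rw [hfdef]
      linarith
    have hdiff : (f u - f v) - (F j u - F j v)
        = (∑ i ∈ Finset.range j, (F i u - F i v))
          + ((∑' i, F (i+(j+1)) u) - ∑' i, F (i+(j+1)) v) := by
      rw [hsplit u, hsplit v, Finset.sum_sub_distrib]
      ring
    have hhead : |∑ i ∈ Finset.range j, (F i u - F i v)| ≤ b^j/16 := by
      have h1 : |∑ i ∈ Finset.range j, (F i u - F i v)|
          ≤ ∑ i ∈ Finset.range j, ((1/δ)*(1/b)^i * dist u v) :=
        le_trans (Finset.abs_sum_le_sum_abs _ _) (Finset.sum_le_sum (fun i _ => hFlip i u v))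
      have h2 : ∑ i ∈ Finset.range j, ((1/δ)*(1/b)^i * dist u v)
          = (1/δ) * (∑ i ∈ Finset.range j, (1/b)^i) * dist u v := by
        simp only [Finset.mul_sum, Finset.sum_mul]
      have h3 : (1/δ) * (∑ i ∈ Finset.range j, (1/b)^i) * dist u v
          ≤ (1/δ) * (2*b*(1/b)^j) * b^(2*j) := by
        have hs := geom_sum_bound hb0 hbhalf j
        have hsnn : (0:ℝ) ≤ ∑ i ∈ Finset.range j, (1/b)^i :=
          Finset.sum_nonneg (fun i _ => by positivity)
        gcongr
      have h4 : (1/δ) * (2*b*(1/b)^j) * b^(2*j) = b^j/16 := by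
        have e1 : (1/b)^j * b^(2*j) = b^j := by
          rw [one_div, inv_pow, two_mul, pow_add]
          field_simp
        calc (1/δ)*(2*b*(1/b)^j)*b^(2*j) = (2*b/δ) * ((1/b)^j*b^(2*j)) := by ring
          _ = (2*b/δ) * b^j := by rw [e1]
          _ = b^j/16 := by rw [hδb]; field_simp; ring
      linarith
    have htl : |(∑' i, F (i+(j+1)) u) - ∑' i, F (i+(j+1)) v| ≤ b^j/16 := by
      obtain ⟨h1, h2⟩ := htail (j+1) u
      obtain ⟨h3, h4⟩ := htail (j+1) v
      have h5 : 2*b^(j+1) ≤ b^j/16 := by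
        have : b^(j+1) = b^j * b := pow_succ b j
        nlinarith [hhj j]
      rw [abs_sub_le_iff]
      constructor <;> linarith
    rw [hdiff]
    calc |_ + _| ≤ _ := abs_add_le _ _
      _ ≤ b^j/8 := by linarith
  -- oscillation lemma at points of A
  have osc : ∀ x ∈ A, ∀ j : ℕ,
      (∃ w, dist w x < b^(2*j)/25 ∧ c * (b^(2*j)/25) ≤ dist w x) →
      ∃ u, dist u x < b^(2*j) ∧ b^j/4 ≤ |f x - f u| := by
    intro x hx j hw
    by_cases hcase : b^j/2 ≤ F j x
    · obtain ⟨p, hp, hpd⟩ := hNcov j x hx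
      refine ⟨p, by rwa [dist_comm], ?_⟩
      have hFp : F j p = 0 := tent_zero_of_mem _ _ _ hp (hw0 j)
      have hk := key j x p hpd.le
      have habs : |F j x - F j p| = F j x := by
        rw [hFp, sub_zero, abs_of_nonneg (hF0 j x)]
      have h5 : |f x - f p| ≥ |F j x - F j p| - |(f x - f p) - (F j x - F j p)| := by
        have := abs_sub_abs_le_abs_sub (F j x - F j p) (f x - f p)
        have h6 : |(F j x - F j p) - (f x - f p)| = |(f x - f p) - (F j x - F j p)| :=
          abs_sub_comm _ _
        linarith
      rw [habs] at h5
      linarith [hhj j]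
    · push_neg at hcase
      have hminlt : min (Metric.infDist x (N j)) (δ*b^(2*j)) < δ*b^(2*j)/2 := by
        by_contra hcon
        push_neg at hcon
        have : ((1/δ)*(1/b)^j) * (δ*b^(2*j)/2) ≤ F j x := by
          rw [hFdef]
          simp only
          rw [tent_def]
          exact mul_le_mul_of_nonneg_left hcon (hslope0 j)
        have heq : ((1/δ)*(1/b)^j) * (δ*b^(2*j)/2) = b^j/2 := by
          rw [← mul_div_assoc, hsw j]
        rw [heq] at this
        linarith
      have hinfx : Metric.infDist x (N j) < δ*b^(2*j)/2 := by
        rcases min_lt_iff.1 hminlt with h | h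
        · exact h
        · linarith [mul_pos hδ0 (hRpos j)]
      obtain ⟨p0, hp0, hp0d⟩ := (Metric.infDist_lt_iff (hNne j)).1 hinfx
      obtain ⟨w, hw1, hw2⟩ := hw
      have hw4 : 4*δ*b^(2*j) ≤ dist w x := by
        have : c * (b^(2*j)/25) = 4*δ*b^(2*j) := by rw [hcδ]; ring
        linarith
      have hinfw : δ*b^(2*j) ≤ Metric.infDist w (N j) := by
        by_contra hcon
        push_neg at hcon
        obtain ⟨q, hq, hqd⟩ := (Metric.infDist_lt_iff (hNne j)).1 hcon
        by_cases hq0 : q = p0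
        · subst hq0
          have htr : dist w x ≤ dist w q + dist q x := dist_triangle w q x
          rw [dist_comm q x] at htr
          linarith [mul_pos hδ0 (hRpos j)]
        · have hsep := hNsep j p0 hp0 q hq (fun h => hq0 h.symm)
          have htr : dist p0 q ≤ dist p0 x + dist x w + dist w q := by
            calc dist p0 q ≤ dist p0 w + dist w q := dist_triangle _ _ _
              _ ≤ dist p0 x + dist x w + dist w q := by
                  linarith [dist_triangle p0 x w]
          rw [dist_comm p0 x] at htr
          rw [dist_comm x w] at htr
          have hb2 : (0:ℝ) < b^(2*j) := hRpos j
          have h25 : dist w x < b^(2*j)/25 := hw1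
          -- dist w q ≥ R - δR/2 - R/25 ≥ δR
          nlinarith [mul_le_mul_of_nonneg_right hδsmall hb2.le]
      have hFw : F j w = b^j := by
        rw [hFdef]
        simp only
        rw [tent_plateau _ _ _ hinfw]
        exact hsw j
      have hwx : dist w x < b^(2*j) := by
        have hb2 : (0:ℝ) < b^(2*j) := hRpos j
        linarith
      refine ⟨w, hwx, ?_⟩
      have hk := key j x w (by rw [dist_comm]; exact hwx.le)
      have habs : |F j x - F j w| ≥ b^j/2 := by
        rw [hFw, abs_sub_comm, abs_of_nonneg (by linarith [hF0 j x, hFle j x] : (0:ℝ) ≤ b^j - F j x)]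
        linarith [hF0 j x]
      have h5 : |f x - f w| ≥ |F j x - F j w| - |(f x - f w) - (F j x - F j w)| := by
        have := abs_sub_abs_le_abs_sub (F j x - F j w) (f x - f w)
        have h6 : |(F j x - F j w) - (f x - f w)| = |(f x - f w) - (F j x - F j w)| :=
          abs_sub_comm _ _
        linarith
      linarith [hhj j]
  -- extract hermeticity radius at points of A
  have hherm' : ∀ x ∈ A, ∃ r₀ > 0, ∀ t : ℝ, 0 < t → t < r₀ →
      ∃ w, dist w x < t ∧ c * t ≤ dist w x := by
    intro x hx
    have h := Filter.eventually_iff.1 (hherm x hx)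
    obtain ⟨u0, hu0, hsub⟩ := mem_nhdsGT_iff_exists_Ioo_subset.1 h
    exact ⟨u0, hu0, fun t ht1 ht2 => hsub ⟨ht1, ht2⟩⟩
  have honeb : 1 < 1/b := one_lt_one_div hb0 hb1
  -- litLip = ⊤ on A
  have hlit : ∀ x ∈ A, litLip f x = ⊤ := by
    intro x hx
    apply litLip_eq_top_of
    intro M hM
    obtain ⟨r₀, hr₀, hball⟩ := hherm' x hx
    obtain ⟨n₀, hn₀⟩ := pow_unbounded_of_one_lt (8*M) honeb
    have hr₁ : (0:ℝ) < min r₀ (2*b^(2*(n₀+2))) := lt_min hr₀ (by positivity)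
    filter_upwards [Ioo_mem_nhdsGT_of_mem (⟨le_refl 0, hr₁⟩ : (0:ℝ) ∈ Ico 0 _)] with r hr
    obtain ⟨hr0, hrlt⟩ := hr
    have hrr₀ : r < r₀ := lt_of_lt_of_le hrlt (min_le_left _ _)
    have hrn₀ : r < 2*b^(2*(n₀+2)) := lt_of_lt_of_le hrlt (min_le_right _ _)
    have hex : ∃ j : ℕ, 2*b^(2*j) ≤ r := by
      obtain ⟨n, hn⟩ := exists_pow_lt_of_lt_one (by linarith : (0:ℝ) < r/2) hb1
      refine ⟨n, ?_⟩
      have : b^(2*n) ≤ b^n := pow_le_pow_of_le_one hb0.le hb1.le (by omega)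
      linarith
    have hjspec := Nat.find_spec hex
    have hjge : n₀ + 3 ≤ Nat.find hex := by
      by_contra hcon
      push_neg at hcon
      have h1 : b^(2*(n₀+2)) ≤ b^(2*(Nat.find hex)) :=
        pow_le_pow_of_le_one hb0.le hb1.le (by omega)
      linarith
    obtain ⟨n, hn⟩ : ∃ n, Nat.find hex = n + 2 := ⟨Nat.find hex - 2, by omega⟩
    rw [hn] at hjspec
    have hnge : n₀ + 1 ≤ n := by omega
    have hprev : r < 2*b^(2*(n+1)) := by
      have h := Nat.find_min hex (show n+1 < Nat.find hex by omega)
      linarith [not_le.1 h]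
    have ht0 : (0:ℝ) < b^(2*(n+2))/25 := by positivity
    have htr₀ : b^(2*(n+2))/25 < r₀ := by
      have h1 := hRpos (n+2)
      linarith
    obtain ⟨w, hw1, hw2⟩ := hball _ ht0 htr₀
    obtain ⟨u, hu1, hu2⟩ := osc x hx (n+2) ⟨w, hw1, hw2⟩
    refine ⟨u, ?_, ?_⟩
    · have := hRpos (n+2)
      linarith
    · have h8 : 8*M*b^n ≤ 1 := by
        have h1 : (1/b)^n₀ ≤ (1/b)^n := pow_le_pow_right₀ honeb.le (by omega)
        have h2 : 8*M < (b^n)⁻¹ := by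
          rw [← inv_pow, ← one_div]
          exact lt_of_lt_of_le hn₀ h1
        have h3 := mul_le_mul_of_nonneg_right h2.le (hhj n).le
        rw [inv_mul_cancel₀ (hhj n).ne'] at h3
        linarith
      have hbj : b^(2*(n+1)) = b^n * b^(n+2) := by
        rw [← pow_add]
        congr 1
        omega
      have hMr : M * r ≤ b^(n+2)/4 := by
        have h1 : M * r ≤ M * (2*b^(2*(n+1))) :=
          mul_le_mul_of_nonneg_left hprev.le hM.le
        have h2 := mul_le_mul_of_nonneg_right h8 (hhj (n+2)).le
        rw [one_mul] at h2
        have h3 : M * (2*b^(2*(n+1))) ≤ b^(n+2)/4 := by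
          rw [hbj]
          nlinarith
        linarith
      linarith
  -- locLip = ⊤ on A
  have hloc : ∀ x ∈ A, locLip f x = ⊤ := by
    intro x hx
    apply locLip_eq_top_of
    intro M hM ε hε
    obtain ⟨r₀, hr₀, hball⟩ := hherm' x hx
    obtain ⟨n₁, hn₁⟩ := pow_unbounded_of_one_lt (4*M) honeb
    obtain ⟨n₂, hn₂⟩ := exists_pow_lt_of_lt_one (lt_min hε hr₀) hb1
    have hj2 : b^(2*(max n₁ n₂)) ≤ b^(max n₁ n₂) :=
      pow_le_pow_of_le_one hb0.le hb1.le (by omega)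
    have hjn₂ : b^(max n₁ n₂) ≤ b^n₂ :=
      pow_le_pow_of_le_one hb0.le hb1.le (le_max_right _ _)
    have hsmall : b^(2*(max n₁ n₂)) < min ε r₀ := lt_of_le_of_lt (hj2.trans hjn₂) hn₂
    have ht0 : (0:ℝ) < b^(2*(max n₁ n₂))/25 := by positivity
    have htr₀ : b^(2*(max n₁ n₂))/25 < r₀ := by
      have h1 := hsmall.trans_le (min_le_right ε r₀)
      have h2 := hRpos (max n₁ n₂)
      linarith
    obtain ⟨w, hw1, hw2⟩ := hball _ ht0 htr₀
    obtain ⟨u, hu1, hu2⟩ := osc x hx (max n₁ n₂) ⟨w, hw1, hw2⟩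
    have hune : u ≠ x := by
      intro h
      rw [h, sub_self, abs_zero] at hu2
      linarith [hhj (max n₁ n₂)]
    refine ⟨u, lt_of_lt_of_le hu1 (hsmall.trans_le (min_le_left _ _)).le, hune, ?_⟩
    have h4 : 4*M*b^(max n₁ n₂) ≤ 1 := by
      have h1 : (1/b)^n₁ ≤ (1/b)^(max n₁ n₂) := pow_le_pow_right₀ honeb.le (le_max_left _ _)
      have h2 : 4*M < (b^(max n₁ n₂))⁻¹ := by
        rw [← inv_pow, ← one_div]
        exact lt_of_lt_of_le hn₁ h1
      have h3 := mul_le_mul_of_nonneg_right h2.le (hhj (max n₁ n₂)).le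
      rw [inv_mul_cancel₀ (hhj (max n₁ n₂)).ne'] at h3
      linarith
    have hbj : b^(2*(max n₁ n₂)) = b^(max n₁ n₂) * b^(max n₁ n₂) := by
      rw [← pow_add, two_mul]
    calc M * dist u x ≤ M * b^(2*(max n₁ n₂)) := mul_le_mul_of_nonneg_left hu1.le hM.le
      _ ≤ b^(max n₁ n₂)/4 := by
          have h2 := mul_le_mul_of_nonneg_right h4 (hhj (max n₁ n₂)).le
          rw [one_mul] at h2
          rw [hbj]
          nlinarith
      _ ≤ |f x - f u| := hu2
  -- finiteness off A
  have hfin : ∀ x ∉ A, litLip f x ≠ ⊤ ∧ bigLip f x ≠ ⊤ ∧ locLip f x ≠ ⊤ := by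
    intro x hx
    have hd : 0 < Metric.infDist x A := (hA.notMem_iff_infDist_pos hAne).1 hx
    obtain ⟨J, hJ⟩ : ∃ J:ℕ, δ*b^(2*J) ≤ Metric.infDist x A/2 := by
      obtain ⟨n, hn⟩ := exists_pow_lt_of_lt_one
        (show (0:ℝ) < Metric.infDist x A/(2*δ) by positivity) hb1
      refine ⟨n, ?_⟩
      have h1 : b^(2*n) ≤ b^n := pow_le_pow_of_le_one hb0.le hb1.le (by omega)
      have h2 : δ*b^(2*n) ≤ δ*b^n := mul_le_mul_of_nonneg_left h1 hδ0.le
      have h3 : δ*b^n < δ*(Metric.infDist x A/(2*δ)) := mul_lt_mul_of_pos_left hn hδ0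
      have h4 : δ*(Metric.infDist x A/(2*δ)) = Metric.infDist x A/2 := by
        field_simp
      linarith
    have hL0 : (0:ℝ) ≤ ∑ i ∈ Finset.range J, (1/δ)*(1/b)^i :=
      Finset.sum_nonneg fun i _ => hslope0 i
    refine lip_ne_top_of_locally_lipschitz f x
      (show (0:ℝ) < Metric.infDist x A/2 by positivity) hL0 ?_
    intro u hu v hv
    have hplateau : ∀ z ∈ ball x (Metric.infDist x A/2), ∀ k:ℕ, F (k+J) z = b^(k+J) := by
      intro z hz k
      have h1 : Metric.infDist x A ≤ Metric.infDist z A + dist x z :=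
        Metric.infDist_le_infDist_add_dist
      have h2 : dist x z < Metric.infDist x A/2 := by
        rw [dist_comm]
        exact mem_ball.1 hz
      have h4 : Metric.infDist z A ≤ Metric.infDist z (N (k+J)) :=
        Metric.infDist_le_infDist_of_subset (hNA _) (hNne _)
      have h5 : δ*b^(2*(k+J)) ≤ δ*b^(2*J) :=
        mul_le_mul_of_nonneg_left (pow_le_pow_of_le_one hb0.le hb1.le (by omega)) hδ0.le
      have h6 : δ*b^(2*(k+J)) ≤ Metric.infDist z (N (k+J)) := by linarith
      rw [hFdef]
      simp only
      rw [tent_plateau _ _ _ h6]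
      exact hsw (k+J)
    have hsplit2 : ∀ z, f z = (∑ i ∈ Finset.range J, F i z) + ∑' k, F (k+J) z := by
      intro z
      rw [hfdef]
      exact (Summable.sum_add_tsum_nat_add J (hFsummable z)).symm
    have htaileq : (∑' k, F (k+J) u) = ∑' k, F (k+J) v := by
      rw [tsum_congr (fun k => hplateau u hu k), tsum_congr (fun k => hplateau v hv k)]
    have hfuv : f u - f v = ∑ i ∈ Finset.range J, (F i u - F i v) := by
      rw [hsplit2 u, hsplit2 v, htaileq, Finset.sum_sub_distrib]
      ring
    rw [hfuv]
    calc |∑ i ∈ Finset.range J, (F i u - F i v)|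
        ≤ ∑ i ∈ Finset.range J, |F i u - F i v| := Finset.abs_sum_le_sum_abs _ _
      _ ≤ ∑ i ∈ Finset.range J, ((1/δ)*(1/b)^i * dist u v) :=
          Finset.sum_le_sum fun i _ => hFlip i u v
      _ = (∑ i ∈ Finset.range J, (1/δ)*(1/b)^i) * dist u v := by rw [Finset.sum_mul]
  exact ⟨f, hfcont, fun x hx => ⟨hlit x hx, hloc x hx⟩, hfin⟩



/-- For a hermetic metric space `X` and `A ⊆ X`, the following are equivalent:
(i) `A` is closed and contains no isolated points of `X`;
(ii) there is a continuous `f : X → ℝ` with `ℓ^∞(f) = L^∞(f) = 𝕃^∞(f) = A`. -/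
theorem closed_no_isolated_iff_exists_three_lip {X : Type*} [MetricSpace X]
    (hX : 0 < hermSpace X) (A : Set X) :
    (IsClosed A ∧ ∀ x ∈ A, ¬ IsOpen ({x} : Set X)) ↔
      ∃ f : X → ℝ, Continuous f ∧
        {x : X | litLip f x = ⊤} = A ∧ {x : X | bigLip f x = ⊤} = A ∧
          {x : X | locLip f x = ⊤} = A := by
  constructor
  · rintro ⟨hA, hiso⟩
    rcases A.eq_empty_or_nonempty with rfl | hAne
    · have hz : ∀ x : X, litLip (0 : X → ℝ) x ≠ ⊤ ∧ bigLip (0 : X → ℝ) x ≠ ⊤ ∧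
          locLip (0 : X → ℝ) x ≠ ⊤ := by
        intro x
        refine lip_ne_top_of_locally_lipschitz 0 x (ρ := 1) (L := 0) one_pos le_rfl ?_
        intro u _ v _
        simp
      refine ⟨0, continuous_const, ?_, ?_, ?_⟩ <;>
        · ext x
          simp only [mem_setOf_eq, mem_empty_iff_false, iff_false]
          first
            | exact (hz x).1
            | exact (hz x).2.1
            | exact (hz x).2.2
    · obtain ⟨c, hc0, hc1, hherm⟩ : ∃ c : ℝ, 0 < c ∧ c ≤ 1/2 ∧ ∀ x ∈ A,
          ∀ᶠ r in 𝓝[>] (0:ℝ), ∃ w, dist w x < r ∧ c * r ≤ dist w x := by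
        set ε := min (hermSpace X) 1 with hεdef
        have hε0 : 0 < ε := lt_min hX zero_lt_one
        have hεtop : ε ≠ ⊤ := ((min_le_right _ _).trans_lt
          (by simp : (1:ENNReal) < ⊤)).ne
        have htr : 0 < ε.toReal := ENNReal.toReal_pos hε0.ne' hεtop
        refine ⟨ε.toReal/2, by positivity, ?_, ?_⟩
        · have h1 : ε.toReal ≤ 1 := by
            have := ENNReal.toReal_mono (by simp : (1:ENNReal) ≠ ⊤) (min_le_right (hermSpace X) 1)
            simpa using this
          linarith
        · intro x hx
          have hspace : hermSpace X ≤ herm x := by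
            exact iInf_le (fun y : {y : X // ¬ IsOpen ({y} : Set X)} => herm y.1)
              ⟨x, hiso x hx⟩
          have hlt : ENNReal.ofReal (ε.toReal/2) < herm x := by
            have h1 : ENNReal.ofReal (ε.toReal/2) < ε := by
              rw [ENNReal.ofReal_lt_iff_lt_toReal (by positivity) hεtop]
              linarith
            exact h1.trans_le (le_trans (min_le_left _ _) hspace)
          unfold herm at hlt
          have hev := eventually_lt_of_lt_liminf hlt (by isBoundedDefault)
          filter_upwards [hev, self_mem_nhdsWithin] with r hr hrpos
          have hrpos' : (0:ℝ) < r := hrpos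
          rw [ENNReal.lt_div_iff_mul_lt (Or.inl (by simp [hrpos']))
            (Or.inl ENNReal.ofReal_ne_top)] at hr
          rw [← ENNReal.ofReal_mul (by positivity)] at hr
          obtain ⟨u, hu⟩ := lt_iSup_iff.1 hr
          obtain ⟨humem, hult⟩ := lt_iSup_iff.1 hu
          refine ⟨u, mem_ball.1 humem, ?_⟩
          by_contra hcon
          push_neg at hcon
          have := ENNReal.ofReal_le_ofReal hcon.le
          exact absurd hult (not_lt.2 this)
      obtain ⟨f, hfc, htop, hfin⟩ := exists_good_function A hA hAne hc0 hc1 hherm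
      refine ⟨f, hfc, ?_, ?_, ?_⟩
      · ext x
        simp only [mem_setOf_eq]
        exact ⟨fun h => by_contra fun hx => (hfin x hx).1 h, fun hx => (htop x hx).1⟩
      · ext x
        simp only [mem_setOf_eq]
        constructor
        · intro h
          by_contra hx
          exact (hfin x hx).2.1 h
        · intro hx
          have h1 : litLip f x = ⊤ := (htop x hx).1
          have h2 : litLip f x ≤ bigLip f x := by
            unfold litLip bigLip
            exact liminf_le_limsup
          rw [h1] at h2
          exact top_le_iff.1 h2
      · ext x
        simp only [mem_setOf_eq]
        exact ⟨fun h => by_contra fun hx => (hfin x hx).2.2 h, fun hx => (htop x hx).2⟩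
  · rintro ⟨f, _, h1, _, h3⟩
    constructor
    · rw [← h3]
      exact isClosed_locLip_top f
    · intro x hx hisol
      have hne := litLip_ne_top_of_isolated f x hisol
      rw [← h1] at hx
      exact hne hx
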